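/- Let φ : ℝⁿ → ℝ be twice continuously differentiable and M > 0 be such that ‖Hess φ(x)‖ ≤ M·‖∇φ(x)‖ (operator norm of the second derivative) for every x with ‖∇φ(x)‖ > 1. Define m(x) = min(1, 1/‖∇φ(x)‖), with m(x) = 1 when ∇φ(x) = 0. Then for every α > 0 and all x, y ∈ ℝⁿ with ‖x − y‖ ≤ α, one has m(x) ≤ e^{Mα}·m(y). -/

import Mathlib

open Metric Classical Set Filter
noncomputable section

lemma grad_norm_eq {n : ℕ} (φ : EuclideanSpace ℝ (Fin n) → ℝ) (z : EuclideanSpace ℝ (Fin n)) :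
    ‖gradient φ z‖ = ‖fderiv ℝ φ z‖ :=
  LinearIsometryEquiv.norm_map _ _

set_option maxHeartbeats 1000000 in
lemma key_gronwall {n : ℕ} (φ : EuclideanSpace ℝ (Fin n) → ℝ) (hφ : ContDiff ℝ 2 φ)
    (M : ℝ) (hM : 0 < M)
    (hHess : ∀ x, 1 < ‖gradient φ x‖ → ‖iteratedFDeriv ℝ 2 φ x‖ ≤ M * ‖gradient φ x‖)
    (α : ℝ) (hα : 0 < α) (x y : EuclideanSpace ℝ (Fin n)) (hxy : dist x y ≤ α) :
    ‖fderiv ℝ φ y‖ ≤ Real.exp (M * α) * max 1 ‖fderiv ℝ φ x‖ := by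
  set γ : ℝ → EuclideanSpace ℝ (Fin n) := fun t => x + t • (y - x) with hγdef
  have hγ0 : γ 0 = x := by simp [hγdef]
  have hγ1 : γ 1 = y := by simp [hγdef]
  have hφ' : ContDiff ℝ 1 (fderiv ℝ φ) := hφ.fderiv_right (by norm_num)
  have hγcont : Continuous γ := by continuity
  set F : ℝ → (EuclideanSpace ℝ (Fin n) →L[ℝ] ℝ) := fun t => fderiv ℝ φ (γ t) with hFdef
  have hFc : Continuous F := hφ'.continuous.comp hγcont
  have hγderiv : ∀ t : ℝ, HasDerivAt γ (y - x) t := by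
    intro t
    have : HasDerivAt (fun s : ℝ => s • (y - x)) ((1:ℝ) • (y - x)) t :=
      (hasDerivAt_id t).smul_const (y - x)
    simpa only [one_smul] using this.const_add x
  set F' : ℝ → (EuclideanSpace ℝ (Fin n) →L[ℝ] ℝ) := fun t => fderiv ℝ (fderiv ℝ φ) (γ t) (y - x) with hF'def
  have hF' : ∀ t : ℝ, HasDerivAt F (F' t) t := by
    intro t
    exact (((hφ'.differentiable (by norm_num)) (γ t)).hasFDerivAt).comp_hasDerivAt t (hγderiv t)
  have hyx : ‖y - x‖ ≤ α := by rw [← dist_eq_norm y x, dist_comm]; exact hxy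
  have hbound : ∀ t : ℝ, 1 < ‖F t‖ → ‖F' t‖ ≤ M * α * ‖F t‖ := by
    intro t ht
    have h1 : ‖F' t‖ ≤ ‖fderiv ℝ (fderiv ℝ φ) (γ t)‖ * ‖y - x‖ :=
      ContinuousLinearMap.le_opNorm _ _
    have h2 : ‖fderiv ℝ (fderiv ℝ φ) (γ t)‖ = ‖iteratedFDeriv ℝ 2 φ (γ t)‖ := by
      rw [← norm_iteratedFDeriv_fderiv (n := 1), ← norm_iteratedFDeriv_fderiv (n := 0),
        norm_iteratedFDeriv_zero]
    have hgt : 1 < ‖gradient φ (γ t)‖ := by rwa [grad_norm_eq]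
    have h3 : ‖iteratedFDeriv ℝ 2 φ (γ t)‖ ≤ M * ‖F t‖ := by
      have := hHess (γ t) hgt
      rwa [grad_norm_eq] at this
    calc ‖F' t‖ ≤ ‖fderiv ℝ (fderiv ℝ φ) (γ t)‖ * ‖y - x‖ := h1
      _ ≤ (M * ‖F t‖) * α := by
          apply mul_le_mul (h2 ▸ h3) hyx (norm_nonneg _)
          positivity
      _ = M * α * ‖F t‖ := by ring
  set c : ℝ := max 1 ‖F 0‖ with hc
  have hc1 : 1 ≤ c := le_max_left _ _
  set S : Set ℝ := Icc (0:ℝ) 1 ∩ {t | ‖F t‖ ≤ c} with hS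
  have hSclosed : IsClosed S := isClosed_Icc.inter (isClosed_le (hFc.norm) continuous_const)
  have h0S : (0:ℝ) ∈ S := ⟨⟨le_rfl, zero_le_one⟩, by
    simp only [Set.mem_setOf_eq, hc]; exact le_max_right _ _⟩
  have hSbdd : BddAbove S := (isBounded_Icc 0 1 |>.subset (inter_subset_left)).bddAbove
  set T : ℝ := sSup S with hT
  have hTS : T ∈ S := hSclosed.csSup_mem ⟨0, h0S⟩ hSbdd
  have hT0 : 0 ≤ T := le_csSup hSbdd h0S
  have hT1 : T ≤ 1 := hTS.1.2
  have hgtT : ∀ t, T < t → t ≤ 1 → c < ‖F t‖ := by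
    intro t hTt ht1
    by_contra h
    push_neg at h
    have : t ∈ S := ⟨⟨hT0.trans hTt.le, ht1⟩, h⟩
    exact absurd (le_csSup hSbdd this) (not_le.mpr hTt)
  have hexp1 : 1 ≤ Real.exp (M * α) := Real.one_le_exp (by positivity)
  have hstep : ∀ s ∈ Ioc T 1, ‖F 1‖ ≤ Real.exp (M * α) * ‖F s‖ := by
    intro s hs
    have hs0 : 0 ≤ s := hT0.trans hs.1.le
    have hgron := norm_le_gronwallBound_of_norm_deriv_right_le
      (f := F) (f' := F') (δ := ‖F s‖) (K := M * α) (ε := 0) (a := s) (b := 1)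
      (hFc.continuousOn)
      (fun t _ => (hF' t).hasDerivWithinAt)
      le_rfl
      (fun t ht => by
        have h1 : 1 < ‖F t‖ := lt_of_le_of_lt hc1 (hgtT t (hs.1.trans_le ht.1) ht.2.le)
        simpa using hbound t h1)
      1 ⟨hs.2, le_rfl⟩
    rw [gronwallBound_ε0] at hgron
    calc ‖F 1‖ ≤ ‖F s‖ * Real.exp (M * α * (1 - s)) := hgron
      _ ≤ ‖F s‖ * Real.exp (M * α) := by
          apply mul_le_mul_of_nonneg_left _ (norm_nonneg _)
          apply Real.exp_le_exp.mpr
          nlinarith [mul_nonneg (mul_nonneg hM.le hα.le) hs0]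
      _ = Real.exp (M * α) * ‖F s‖ := mul_comm _ _
  have hmain : ‖F 1‖ ≤ Real.exp (M * α) * c := by
    rcases eq_or_lt_of_le hT1 with hTeq | hTlt
    · have : ‖F 1‖ ≤ c := by have h2 := hTS.2; rw [hTeq] at h2; exact h2
      calc ‖F 1‖ ≤ c := this
        _ = 1 * c := (one_mul c).symm
        _ ≤ Real.exp (M * α) * c := by
            apply mul_le_mul_of_nonneg_right hexp1 (le_trans zero_le_one hc1)
    · have htend : Tendsto (fun s => Real.exp (M * α) * ‖F s‖) (nhdsWithin T (Ioi T))
          (nhds (Real.exp (M * α) * ‖F T‖)) := by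
        apply Tendsto.mono_left _ nhdsWithin_le_nhds
        exact (continuous_const.mul hFc.norm).tendsto T
      have hev : ∀ᶠ s in nhdsWithin T (Ioi T), ‖F 1‖ ≤ Real.exp (M * α) * ‖F s‖ := by
        filter_upwards [Ioc_mem_nhdsGT_of_mem ⟨le_rfl, hTlt⟩] with s hs
        exact hstep s hs
      have := ge_of_tendsto htend hev
      calc ‖F 1‖ ≤ Real.exp (M * α) * ‖F T‖ := this
        _ ≤ Real.exp (M * α) * c := by
            apply mul_le_mul_of_nonneg_left hTS.2 (Real.exp_nonneg _)
  have e1 : fderiv ℝ φ y = F 1 := by rw [hFdef]; simp only []; rw [hγ1]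
  have e0 : fderiv ℝ φ x = F 0 := by rw [hFdef]; simp only []; rw [hγ0]
  rw [e1, e0]
  simpa [hc] using hmain

theorem stmt2 {n : ℕ} (φ : EuclideanSpace ℝ (Fin n) → ℝ) (hφ : ContDiff ℝ 2 φ)
    (M : ℝ) (hM : 0 < M)
    (hHess : ∀ x, 1 < ‖gradient φ x‖ → ‖iteratedFDeriv ℝ 2 φ x‖ ≤ M * ‖gradient φ x‖)
    (m : EuclideanSpace ℝ (Fin n) → ℝ)
    (hm : ∀ x, m x = if gradient φ x = 0 then 1 else min 1 ‖gradient φ x‖⁻¹)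
    (α : ℝ) (hα : 0 < α) (x y : EuclideanSpace ℝ (Fin n)) (hxy : dist x y ≤ α) :
    m x ≤ Real.exp (M * α) * m y := by
  have hexp1 : 1 ≤ Real.exp (M * α) := Real.one_le_exp (by positivity)
  have hmx1 : m x ≤ 1 := by
    rw [hm]; split
    · exact le_rfl
    · exact min_le_left _ _
  by_cases hy : ‖gradient φ y‖ ≤ Real.exp (M * α)
  · -- easy case: m y ≥ exp(-(Mα))
    have hmy : Real.exp (-(M * α)) ≤ m y := by
      rw [hm]; split
      · exact Real.exp_le_one_iff.mpr (neg_nonpos.mpr (by positivity))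
      · rename_i h
        refine le_min (Real.exp_le_one_iff.mpr (neg_nonpos.mpr (by positivity))) ?_
        rw [Real.exp_neg]
        exact inv_anti₀ (norm_pos_iff.mpr h) hy
    calc m x ≤ 1 := hmx1
      _ = Real.exp (M * α) * Real.exp (-(M * α)) := by
          rw [← Real.exp_add]; simp
      _ ≤ Real.exp (M * α) * m y := by
          apply mul_le_mul_of_nonneg_left hmy (Real.exp_nonneg _)
  · push_neg at hy
    have hgy1 : 1 < ‖gradient φ y‖ := lt_of_le_of_lt hexp1 hy
    have hgy0 : (0:ℝ) < ‖gradient φ y‖ := lt_trans one_pos hgy1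
    have hkey := key_gronwall φ hφ M hM hHess α hα x y hxy
    rw [← grad_norm_eq, ← grad_norm_eq] at hkey
    have hgx1 : 1 < ‖gradient φ x‖ := by
      by_contra h
      push_neg at h
      rw [max_eq_left h] at hkey
      rw [mul_one] at hkey
      exact absurd hkey (not_le.mpr hy)
    rw [max_eq_right hgx1.le] at hkey
    have hgx0 : (0:ℝ) < ‖gradient φ x‖ := lt_trans one_pos hgx1
    have hmx : m x = ‖gradient φ x‖⁻¹ := by
      rw [hm, if_neg (by simp only [← norm_pos_iff]; exact hgx0)]
      exact min_eq_right (by rw [inv_le_one_iff₀]; right; exact hgx1.le)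
    have hmy : m y = ‖gradient φ y‖⁻¹ := by
      rw [hm, if_neg (by simp only [← norm_pos_iff]; exact hgy0)]
      exact min_eq_right (by rw [inv_le_one_iff₀]; right; exact hgy1.le)
    rw [hmx, hmy]
    have hx' := mul_inv_cancel₀ (ne_of_gt hgx0)
    have hy' := mul_inv_cancel₀ (ne_of_gt hgy0)
    nlinarith [mul_le_mul_of_nonneg_right hkey
      (le_of_lt (mul_pos (inv_pos.mpr hgx0) (inv_pos.mpr hgy0))), hx', hy',
      inv_pos.mpr hgx0, inv_pos.mpr hgy0]
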